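/- The Ramsey ideal R on [ω]² is not P⁻([ω]²): with A_n = {{k,i} : i > k ≥ n}, each A_n ∉ R, A_0 = [ω]², A_n \ A_{n+1} ∈ R, but there is no B ∉ R with B ⊆* A_n for all n. -/

import Mathlib

/-- `[ω]²`: unordered pairs of distinct natural numbers. -/
def Pairs : Type := {s : Sym2 ℕ // ¬ s.IsDiag}

/-- `[H]²` as a subset of `[ω]²`: the pairs with both elements in `H`. -/
def pairsIn (H : Set ℕ) : Set Pairs :=
  {s : Pairs | ∀ a : ℕ, a ∈ s.val → a ∈ H}

/-- The Ramsey ideal `R` on `[ω]²`: sets of pairs containing no `[H]²` for infinite `H`. -/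
def RamseyIdeal : Set (Set Pairs) :=
  {A : Set Pairs | ¬ ∃ H : Set ℕ, H.Infinite ∧ pairsIn H ⊆ A}

/-- `A_n = {{k,i} : i > k ≥ n}`, i.e. the pairs with both elements `≥ n`. -/
def Awit (n : ℕ) : Set Pairs :=
  {s : Pairs | ∀ a : ℕ, a ∈ s.val → n ≤ a}

/-- The Ramsey ideal is not `P⁻([ω]²)`: each `A_n ∉ R`, `A_0 = [ω]²`,
`A_n \ A_{n+1} ∈ R`, but there is no `B ∉ R` with `B ⊆* A_n` for all `n`. -/
theorem ramsey_not_Pminus :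
    (∀ n, Awit n ∉ RamseyIdeal) ∧
    Awit 0 = (Set.univ : Set Pairs) ∧
    (∀ n, Awit n \ Awit (n + 1) ∈ RamseyIdeal) ∧
    ¬ ∃ B : Set Pairs, B ∉ RamseyIdeal ∧ ∀ n, (B \ Awit n).Finite := by
  refine ⟨?_, ?_, ?_, ?_⟩
  · intro n hn
    exact hn ⟨Set.Ici n, Set.Ici_infinite n, fun s hs a ha => hs a ha⟩
  · ext s
    simp [Awit, Nat.zero_le]
  · rintro n ⟨H, hHinf, hsub⟩
    obtain ⟨a, ha⟩ := (hHinf.diff (Set.finite_singleton n)).nonempty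
    obtain ⟨b, hb⟩ := ((hHinf.diff (Set.finite_singleton n)).diff
      (Set.finite_singleton a)).nonempty
    have hab : a ≠ b := fun h => hb.2 (by simp [h])
    have hp : (⟨s(a, b), by simp [hab]⟩ : Pairs) ∈ pairsIn H := by
      intro c hc
      rcases Sym2.mem_iff.mp hc with rfl | rfl
      · exact ha.1
      · exact hb.1.1
    have := hsub hp
    obtain ⟨hmem1, hmem2⟩ := this
    have hmem2 : ¬ ∀ c : ℕ, c ∈ (s(a, b) : Sym2 ℕ) → n + 1 ≤ c := hmem2
    simp only [not_forall] at hmem2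
    obtain ⟨c, hc, hcn⟩ := hmem2
    have hcn' : c = n := le_antisymm (Nat.lt_succ_iff.mp (Nat.lt_of_not_le hcn)) (hmem1 c hc)
    rcases Sym2.mem_iff.mp hc with rfl | rfl
    · exact ha.2 (by simp [hcn'])
    · exact hb.1.2 (by simp [hcn'])
  · rintro ⟨B, hB, hfin⟩
    obtain ⟨H, hHinf, hsub⟩ := not_not.mp hB
    obtain ⟨k, hk⟩ := hHinf.nonempty
    set g : ℕ → Pairs := fun i =>
      if h : k = i then ⟨s(0, 1), by simp⟩ else ⟨s(k, i), by simp [h]⟩ with hg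
    have himg : g '' (H \ {k}) ⊆ B \ Awit (k + 1) := by
      rintro _ ⟨i, hi, rfl⟩
      have hki : k ≠ i := fun h => hi.2 (by simp [h])
      constructor
      · apply hsub
        intro c hc
        rw [show (g i).val = s(k, i) by simp [hg, hki]] at hc
        rcases Sym2.mem_iff.mp hc with rfl | rfl
        · exact hk
        · exact hi.1
      · intro hA
        have : k + 1 ≤ k := hA k (by simp [hg, hki])
        omega
    have hinj : Set.InjOn g (H \ {k}) := by
      intro i hi j hj hij
      have hki : k ≠ i := fun h => hi.2 (by simp [h])
      have hkj : k ≠ j := fun h => hj.2 (by simp [h])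
      have hval : (g i).val = (g j).val := congrArg Subtype.val hij
      rw [show (g i).val = s(k, i) by simp [hg, hki],
        show (g j).val = s(k, j) by simp [hg, hkj]] at hval
      exact Sym2.congr_right.mp hval
    have hinf : (g '' (H \ {k})).Infinite :=
      (hHinf.diff (Set.finite_singleton k)).image hinj
    exact hinf ((hfin (k + 1)).subset himg)
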